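/- Let 0 < α < ε < 1 be constants, let D be a fixed positive integer, let c = ⌈(1+ε)n⌉, let p satisfy log n/n ≤ p ≤ 2 log n/n, and let γ:ℕ→(0,1) be any function with γ(n)→0. Then the probability that G ~ G_c(n,p) admits an integer j with n/log^{0.9} n ≤ j ≤ 2n/log^{0.4} n and subsets X ⊆ [n], W ⊆ [n], W' ⊆ W, 𝒞₁ ⊆ [c], 𝒞₂ ⊆ 𝒞₁ such that |X| = j, (1−γ(n))·n/log log n ≤ |W| ≤ (1+γ(n))·n/log log n, |𝒞₁| = ⌈αn⌉, |W'| ≤ 2Dj, |𝒞₂| ≤ 2Dj, and every edge xw of G with x ∈ X and w ∈ W satisfies c(xw) ∈ 𝒞₂ or w ∈ W' or c(xw) ∉ 𝒞₁, tends to 0 as n→∞. -/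

import Mathlib

open MeasureTheory Filter
open scoped ENNReal

/-- The potential edges of a `k`-uniform hypergraph on vertex set `Fin n`. -/
abbrev HEdge (n k : ℕ) := {e : Finset (Fin n) // e.card = k}

/-- A sample of the colored random hypergraph: each potential edge is either absent
(`none`) or present with a color from `Fin c`. -/
abbrev CSample (n k c : ℕ) := HEdge n k → Option (Fin c)

/-- A sample of the uncolored random hypergraph. -/
abbrev USample (n k : ℕ) := HEdge n k → Bool

/-- Every subset of the (finite) status space of an edge is measurable. -/
instance optionFinMeasurableSpace (c : ℕ) : MeasurableSpace (Option (Fin c)) := ⊤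

/-- The old `PMF.bernoulli` with an `ℝ≥0∞` parameter: probability `p` to `true`
and `1 - p` to `false`. -/
noncomputable def ennBernoulli (p : ℝ≥0∞) (h : p ≤ 1) : PMF Bool :=
  PMF.ofFintype (fun b => cond b p (1 - p)) (by simp [h])

/-- The distribution of the status of a single edge: absent with probability `1 - p`,
present with a uniformly random color with probability `p`. -/
noncomputable def edgePMF (c : ℕ) (p : ℝ≥0∞) : PMF (Option (Fin c)) :=
  if h : c = 0 then PMF.pure none
  else
    haveI : Nonempty (Fin c) := ⟨⟨0, Nat.pos_of_ne_zero h⟩⟩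
    (ennBernoulli (min p 1) (min_le_right _ _)).bind fun b =>
      if b then (PMF.uniformOfFintype (Fin c)).map some else PMF.pure none

/-- The law of the randomly edge-colored random `k`-uniform hypergraph `H^k_c(n,p)`:
the edges are independent and each is present with probability `p`, receiving a
uniformly random color from `[c]`. -/
noncomputable def cHyper (n k c : ℕ) (p : ℝ≥0∞) : Measure (CSample n k c) :=
  Measure.pi fun _ => (edgePMF c p).toMeasure

/-- The law of the uncolored binomial random `k`-uniform hypergraph `H^k(n,p)`. -/
noncomputable def uHyper (n k : ℕ) (p : ℝ≥0∞) : Measure (USample n k) :=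
  Measure.pi fun _ => (ennBernoulli (min p 1) (min_le_right _ _)).toMeasure

/-- The status of the pair `{v, w}` in a colored graph sample (k = 2):
`none` if absent (or if `v = w`), `some x` if present with color `x`. -/
def col {n c : ℕ} (ω : CSample n 2 c) (v w : Fin n) : Option (Fin c) :=
  if h : v = w then none else ω ⟨{v, w}, Finset.card_pair h⟩

/-- Adjacency in an uncolored graph sample (k = 2). -/
def uadj {n : ℕ} (ω : USample n 2) (v w : Fin n) : Prop :=
  if h : v = w then False else ω ⟨{v, w}, Finset.card_pair h⟩ = true


lemma edgePMF_apply_some {c : ℕ} (hc : c ≠ 0) (p : ℝ≥0∞) (y : Fin c) :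
    edgePMF c p (some y) = min p 1 * (c : ℝ≥0∞)⁻¹ := by
  haveI : Nonempty (Fin c) := ⟨⟨0, Nat.pos_of_ne_zero hc⟩⟩
  rw [edgePMF, dif_neg hc, PMF.bind_apply, tsum_bool]
  simp [ennBernoulli, PMF.ofFintype_apply, PMF.map_apply, PMF.uniformOfFintype_apply, PMF.pure_apply,
    tsum_ite_eq]

lemma config_bound (n cc : ℕ) (hcc : cc ≠ 0) (q : ℝ≥0∞)
    (X W W' : Finset (Fin n)) (C1 C2 : Finset (Fin cc)) :
    cHyper n 2 cc q {ω | ∀ x ∈ X, ∀ w ∈ W, ∀ y, col ω x w = some y →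
          y ∈ C2 ∨ w ∈ W' ∨ y ∉ C1}
      ≤ (1 - (C1 \ C2).card * (min q 1 * (cc : ℝ≥0∞)⁻¹)) ^
          (X.card * (W \ (W' ∪ X)).card) := by
  classical
  haveI : MeasurableSingletonClass (Option (Fin cc)) :=
    ⟨fun _ => MeasurableSpace.measurableSet_top⟩
  set W'' := W \ (W' ∪ X) with hW''
  set B : Finset (Option (Fin cc)) := (C1 \ C2).image some with hBdef
  set S : Finset (HEdge n 2) :=
    Finset.univ.filter (fun e => ∃ x ∈ X, ∃ w ∈ W'', (e : Finset (Fin n)) = {x, w}) with hS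
  set ν := (edgePMF cc q).toMeasure with hν
  -- event is inside the cylinder
  have hsub : {ω : CSample n 2 cc | ∀ x ∈ X, ∀ w ∈ W, ∀ y, col ω x w = some y →
      y ∈ C2 ∨ w ∈ W' ∨ y ∉ C1} ⊆ {ω | ∀ e ∈ S, ω e ∈ (↑B : Set (Option (Fin cc)))ᶜ} := by
    intro ω hω e he
    simp only [hS, Finset.mem_filter] at he
    obtain ⟨-, x, hx, w, hw, hedge⟩ := he
    have hwW : w ∈ W := (Finset.mem_sdiff.mp hw).1
    have hwnot : w ∉ W' ∪ X := (Finset.mem_sdiff.mp hw).2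
    have hxw : x ≠ w := by rintro rfl; exact hwnot (Finset.mem_union_right _ hx)
    intro hmem
    rw [Finset.mem_coe, hBdef, Finset.mem_image] at hmem
    obtain ⟨y, hy, hωe⟩ := hmem
    have hcol : col ω x w = some y := by
      rw [col, dif_neg hxw]
      have he2 : (⟨{x, w}, Finset.card_pair hxw⟩ : HEdge n 2) = e := Subtype.ext hedge.symm
      rw [he2, hωe]
    rcases hω x hx w hwW y hcol with h | h | h
    · exact (Finset.mem_sdiff.mp hy).2 h
    · exact hwnot (Finset.mem_union_left _ h)
    · exact h (Finset.mem_sdiff.mp hy).1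
  -- measure of the cylinder
  have hcyl : cHyper n 2 cc q {ω | ∀ e ∈ S, ω e ∈ (↑B : Set (Option (Fin cc)))ᶜ}
      = (ν (↑B : Set (Option (Fin cc)))ᶜ) ^ S.card := by
    have heq : {ω : CSample n 2 cc | ∀ e ∈ S, ω e ∈ (↑B : Set (Option (Fin cc)))ᶜ}
        = Set.pi Set.univ
            (fun e => if e ∈ S then (↑B : Set (Option (Fin cc)))ᶜ else Set.univ) := by
      ext ω
      simp only [Set.mem_setOf_eq, Set.mem_pi, Set.mem_univ, forall_true_left]
      constructor
      · intro h e; split_ifs with he; exacts [h e he, Set.mem_univ _]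
      · intro h e he; have h2 := h e; rwa [if_pos he] at h2
    rw [cHyper, heq, Measure.pi_pi]
    have hfac : ∀ e : HEdge n 2,
        ν (if e ∈ S then (↑B : Set (Option (Fin cc)))ᶜ else Set.univ)
          = if e ∈ S then ν (↑B : Set (Option (Fin cc)))ᶜ else 1 := by
      intro e; split_ifs
      · rfl
      · exact measure_univ
    rw [Finset.prod_congr rfl fun e _ => hfac e, Finset.prod_ite_mem, Finset.univ_inter,
      Finset.prod_const]
  -- value of the complement
  have hνB : ν (↑B : Set (Option (Fin cc)))
      = (C1 \ C2).card * (min q 1 * (cc : ℝ≥0∞)⁻¹) := by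
    rw [hν, PMF.toMeasure_apply_finset,
      Finset.sum_image (fun a _ b _ h => Option.some_injective _ h),
      Finset.sum_congr rfl fun y _ => edgePMF_apply_some hcc q y, Finset.sum_const,
      nsmul_eq_mul]
  have hcompl : ν (↑B : Set (Option (Fin cc)))ᶜ
      = 1 - (C1 \ C2).card * (min q 1 * (cc : ℝ≥0∞)⁻¹) := by
    rw [hν, prob_compl_eq_one_sub MeasurableSpace.measurableSet_top, ← hν, hνB]
  -- counting
  have hcard : X.card * W''.card ≤ S.card := by
    have h1 : ((X ×ˢ W'').image (fun q : Fin n × Fin n => ({q.1, q.2} : Finset (Fin n)))).card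
        = X.card * W''.card := by
      rw [Finset.card_image_of_injOn, Finset.card_product]
      rintro ⟨x, w⟩ hxw ⟨x', w'⟩ hxw' hpair
      have hpair' : ({x, w} : Finset (Fin n)) = {x', w'} := hpair
      simp only [Finset.mem_coe, Finset.mem_product] at hxw hxw'
      have hwX : w ∉ X := fun h => (Finset.mem_sdiff.mp hxw.2).2 (Finset.mem_union_right _ h)
      have hw'X : w' ∉ X := fun h => (Finset.mem_sdiff.mp hxw'.2).2 (Finset.mem_union_right _ h)
      have hw' : w' ∈ ({x, w} : Finset (Fin n)) := by rw [hpair']; simp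
      have hx' : x' ∈ ({x, w} : Finset (Fin n)) := by rw [hpair']; simp
      simp only [Finset.mem_insert, Finset.mem_singleton] at hw' hx'
      have hww : w' = w := by
        rcases hw' with h | h
        · exact absurd (h ▸ hxw.1) hw'X
        · exact h
      have hxx : x' = x := by
        rcases hx' with h | h
        · exact h
        · exact absurd (h ▸ hxw'.1) hwX
      rw [Prod.mk.injEq]; exact ⟨hxx.symm, hww.symm⟩
    have h2 : ((X ×ˢ W'').image fun q : Fin n × Fin n => ({q.1, q.2} : Finset (Fin n)))
        ⊆ S.image Subtype.val := by
      intro F hF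
      simp only [Finset.mem_image] at hF ⊢
      obtain ⟨⟨x, w⟩, hxw, rfl⟩ := hF
      simp only [Finset.mem_product] at hxw
      have hxnew : x ≠ w := by
        rintro rfl
        exact (Finset.mem_sdiff.mp hxw.2).2 (Finset.mem_union_right _ hxw.1)
      refine ⟨⟨{x, w}, Finset.card_pair hxnew⟩, ?_, rfl⟩
      simp only [hS, Finset.mem_filter, Finset.mem_univ, true_and]
      exact ⟨x, hxw.1, w, hxw.2, rfl⟩
    calc X.card * W''.card = _ := h1.symm
      _ ≤ (S.image Subtype.val).card := Finset.card_le_card h2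
      _ ≤ S.card := Finset.card_image_le
  calc cHyper n 2 cc q _ ≤ cHyper n 2 cc q {ω | ∀ e ∈ S, ω e ∈ (↑B : Set (Option (Fin cc)))ᶜ} :=
        measure_mono hsub
    _ = (ν (↑B : Set (Option (Fin cc)))ᶜ) ^ S.card := hcyl
    _ = (1 - (C1 \ C2).card * (min q 1 * (cc : ℝ≥0∞)⁻¹)) ^ S.card := by rw [hcompl]
    _ ≤ (1 - (C1 \ C2).card * (min q 1 * (cc : ℝ≥0∞)⁻¹)) ^ (X.card * W''.card) :=
        pow_le_pow_of_le_one zero_le tsub_le_self hcard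

set_option maxHeartbeats 2000000 in
lemma per_n_bound (α ε : ℝ) (hα0 : 0 < α) (hα1 : α < 1) (hε0 : 0 < ε) (hε1 : ε < 1)
    (D : ℕ) (n : ℕ) (pn γn : ℝ)
    (hplo : Real.log n / n ≤ pn) (hγpos : 0 < γn)
    (hn : 1 ≤ n)
    (h1 : 1 ≤ Real.log n) (h2 : 1 ≤ Real.log (Real.log n))
    (h3 : γn ≤ 1 / 4)
    (h4 : Real.log (Real.log n) / Real.log n ^ (0.4 : ℝ) ≤ 1 / (8 * (2 * D + 1)))
    (h5 : Real.log n ^ (0.9 : ℝ) * Real.log (Real.log n) / Real.log n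
        ≤ α / (16 * (7 * Real.log 2 + 1)))
    (h6 : 8 * D / α ≤ Real.log n ^ (0.4 : ℝ)) :
    cHyper n 2 ⌈(1 + ε) * n⌉₊ (ENNReal.ofReal pn)
      {ω | ∃ j : ℕ, ∃ X W W' : Finset (Fin n), ∃ C1 C2 : Finset (Fin ⌈(1 + ε) * n⌉₊),
        (n : ℝ) / Real.log n ^ (0.9 : ℝ) ≤ (j : ℝ) ∧
        (j : ℝ) ≤ 2 * n / Real.log n ^ (0.4 : ℝ) ∧
        X.card = j ∧
        (1 - γn) * n / Real.log (Real.log n) ≤ (W.card : ℝ) ∧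
        (W.card : ℝ) ≤ (1 + γn) * n / Real.log (Real.log n) ∧
        W' ⊆ W ∧ W'.card ≤ 2 * D * j ∧
        C1.card = ⌈α * (n : ℝ)⌉₊ ∧ C2 ⊆ C1 ∧ C2.card ≤ 2 * D * j ∧
        ∀ x ∈ X, ∀ w ∈ W, ∀ y, col ω x w = some y → y ∈ C2 ∨ w ∈ W' ∨ y ∉ C1}
      ≤ ENNReal.ofReal (4 * Real.exp (-(n : ℝ))) := by
  classical
  set cc := ⌈(1 + ε) * (n : ℝ)⌉₊ with hccdef
  set q := ENNReal.ofReal pn with hqdef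
  set L := Real.log n with hLdef
  set LL := Real.log L with hLLdef
  set N := (n : ℝ) with hNdef
  set L4 := L ^ (0.4 : ℝ) with hL4def
  set L9 := L ^ (0.9 : ℝ) with hL9def
  have hN1 : 1 ≤ N := by rw [hNdef]; exact_mod_cast hn
  have hN0 : 0 < N := lt_of_lt_of_le one_pos hN1
  have hL0 : 0 < L := lt_of_lt_of_le one_pos h1
  have hLL0 : 0 < LL := lt_of_lt_of_le one_pos h2
  have hL4pos : 0 < L4 := Real.rpow_pos_of_pos hL0 _
  have hL9pos : 0 < L9 := Real.rpow_pos_of_pos hL0 _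
  have hLN : L ≤ N := (Real.log_le_sub_one_of_pos hN0).trans (by linarith)
  have hlog2 : 0 < Real.log 2 := Real.log_pos one_lt_two
  set c₀ := 7 * Real.log 2 + 1 with hc₀def
  have hc₀ : 0 < c₀ := by positivity
  have hcc0 : cc ≠ 0 := by
    have h : 0 < (1 + ε) * N := by positivity
    exact Nat.pos_iff_ne_zero.mp (Nat.ceil_pos.mpr h)
  have hcc3 : (cc : ℝ) ≤ 3 * N := by
    have h := Nat.ceil_lt_add_one (show (0:ℝ) ≤ (1 + ε) * N by positivity)
    rw [hccdef]
    nlinarith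
  have hcc2 : cc ≤ 2 * n + 1 := by
    rw [hccdef]
    refine Nat.ceil_le.mpr ?_
    push_cast
    nlinarith
  set r := α * L / (8 * N) with hrdef
  have hr0 : 0 ≤ r := by positivity
  have hr1 : r ≤ 1 := by
    rw [hrdef, div_le_one (by positivity)]
    nlinarith
  set BND1 := ENNReal.ofReal (Real.exp (-(c₀ * N))) with hBND1def
  set Valid : Finset (Fin n) × Finset (Fin n) × Finset (Fin n) × Finset (Fin cc) × Finset (Fin cc) → Prop := fun i =>
    N / L9 ≤ (i.1.card : ℝ) ∧ (i.1.card : ℝ) ≤ 2 * N / L4 ∧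
    (1 - γn) * N / LL ≤ (i.2.1.card : ℝ) ∧ i.2.2.1 ⊆ i.2.1 ∧
    i.2.2.1.card ≤ 2 * D * i.1.card ∧ i.2.2.2.1.card = ⌈α * N⌉₊ ∧
    i.2.2.2.2 ⊆ i.2.2.2.1 ∧ i.2.2.2.2.card ≤ 2 * D * i.1.card with hValiddef
  set A : Finset (Fin n) × Finset (Fin n) × Finset (Fin n) × Finset (Fin cc) × Finset (Fin cc) → Set (CSample n 2 cc) := fun i =>
    {ω | Valid i ∧ ∀ x ∈ i.1, ∀ w ∈ i.2.1, ∀ y, col ω x w = some y →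
      y ∈ i.2.2.2.2 ∨ w ∈ i.2.2.1 ∨ y ∉ i.2.2.2.1} with hAdef
  have hcover : {ω : CSample n 2 cc | ∃ j : ℕ, ∃ X W W' : Finset (Fin n),
      ∃ C1 C2 : Finset (Fin cc),
      N / L9 ≤ (j : ℝ) ∧ (j : ℝ) ≤ 2 * N / L4 ∧ X.card = j ∧
      (1 - γn) * N / LL ≤ (W.card : ℝ) ∧ (W.card : ℝ) ≤ (1 + γn) * N / LL ∧
      W' ⊆ W ∧ W'.card ≤ 2 * D * j ∧
      C1.card = ⌈α * N⌉₊ ∧ C2 ⊆ C1 ∧ C2.card ≤ 2 * D * j ∧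
      ∀ x ∈ X, ∀ w ∈ W, ∀ y, col ω x w = some y → y ∈ C2 ∨ w ∈ W' ∨ y ∉ C1}
      ⊆ ⋃ i, A i := by
    rintro ω ⟨j, X, W, W', C1, C2, hj1, hj2, hXc, hW1, hW2, hWsub, hW'c, hC1, hC21, hC2c, hprop⟩
    cases hXc
    exact Set.mem_iUnion.mpr ⟨(X, W, W', C1, C2),
      ⟨⟨hj1, hj2, hW1, hWsub, hW'c, hC1, hC21, hC2c⟩, hprop⟩⟩
  have hAbound : ∀ i, cHyper n 2 cc q (A i) ≤ BND1 := by
    rintro ⟨X, W, W', C1, C2⟩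
    by_cases hv : Valid (X, W, W', C1, C2)
    · obtain ⟨hj1, hj2, hW1, hWsub, hW'c, hC1, hC21, hC2c⟩ := hv
      simp only at hj1 hj2 hW1 hWsub hW'c hC1 hC21 hC2c
      have hA : A (X, W, W', C1, C2) ⊆ {ω | ∀ x ∈ X, ∀ w ∈ W, ∀ y, col ω x w = some y →
          y ∈ C2 ∨ w ∈ W' ∨ y ∉ C1} := fun ω hω => hω.2
      have hstep := config_bound n cc hcc0 q X W W' C1 C2
      set k := (C1 \ C2).card with hkdef
      set m := X.card * (W \ (W' ∪ X)).card with hmdef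
      set j := X.card with hjdef
      -- real bounds
      have hjR0 : 0 < (j : ℝ) := lt_of_lt_of_le (by positivity) hj1
      have hkR : α * N / 2 ≤ (k : ℝ) := by
        have hsub := Finset.card_le_card hC21
        have hks : (k : ℝ) = (C1.card : ℝ) - C2.card := by
          rw [hkdef, Finset.card_sdiff_of_subset hC21]
          push_cast [hsub]
          ring
        have hceil : α * N ≤ (C1.card : ℝ) := by rw [hC1]; exact Nat.le_ceil _
        have hC2R : (C2.card : ℝ) ≤ 2 * D * j := by exact_mod_cast hC2c
        have hDpos : (0:ℝ) ≤ (D:ℝ) := Nat.cast_nonneg _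
        -- 2*D*j ≤ 2*D*(2N/L4) and 4*D*N/L4 ≤ α*N/2 from h6
        have h6' : 8 * (D:ℝ) ≤ α * L4 := by
          rw [div_le_iff₀ hα0] at h6
          linarith [h6]
        have hjb : (2:ℝ) * D * j ≤ 4 * D * N / L4 := by
          rw [le_div_iff₀ hL4pos]
          rw [le_div_iff₀ hL4pos] at hj2
          nlinarith
        have hfin : 4 * (D:ℝ) * N / L4 ≤ α * N / 2 := by
          rw [div_le_div_iff₀ hL4pos (by norm_num : (0:ℝ) < 2)]
          nlinarith
        linarith
      -- lower bound on the bad-color probability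
      have hq1 : ENNReal.ofReal (L / N) ≤ min q 1 := by
        refine le_min (ENNReal.ofReal_le_ofReal hplo) ?_
        rw [← ENNReal.ofReal_one]
        exact ENNReal.ofReal_le_ofReal (by rw [div_le_one hN0]; exact hLN)
      have hccinv : (ENNReal.ofReal (3 * N))⁻¹ ≤ ((cc : ℕ) : ℝ≥0∞)⁻¹ := by
        refine ENNReal.inv_le_inv' ?_
        calc ((cc : ℕ) : ℝ≥0∞) = ENNReal.ofReal (cc : ℝ) := (ENNReal.ofReal_natCast _).symm
          _ ≤ ENNReal.ofReal (3 * N) := ENNReal.ofReal_le_ofReal hcc3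
      have hk' : ENNReal.ofReal (α * N / 2) ≤ (k : ℝ≥0∞) := by
        rw [← ENNReal.ofReal_natCast k]
        exact ENNReal.ofReal_le_ofReal hkR
      have hρ : ENNReal.ofReal r ≤ (k : ℝ≥0∞) * (min q 1 * ((cc : ℕ) : ℝ≥0∞)⁻¹) := by
        have hval : (α * N / 2) * ((L / N) * (3 * N)⁻¹) = α * L / (6 * N) := by
          field_simp
          ring
        have hrle : r ≤ (α * N / 2) * ((L / N) * (3 * N)⁻¹) := by
          rw [hval, hrdef]
          apply div_le_div_of_nonneg_left (by positivity) (by positivity)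
          linarith
        calc ENNReal.ofReal r ≤ ENNReal.ofReal ((α * N / 2) * ((L / N) * (3 * N)⁻¹)) :=
              ENNReal.ofReal_le_ofReal hrle
          _ = ENNReal.ofReal (α * N / 2) *
              (ENNReal.ofReal (L / N) * (ENNReal.ofReal (3 * N))⁻¹) := by
              rw [ENNReal.ofReal_mul (by positivity), ENNReal.ofReal_mul (by positivity),
                ENNReal.ofReal_inv_of_pos (by positivity)]
          _ ≤ (k : ℝ≥0∞) * (min q 1 * ((cc : ℕ) : ℝ≥0∞)⁻¹) :=
              mul_le_mul' hk' (mul_le_mul' hq1 hccinv)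
      -- lower bound on the number of edges
      have hmR : N / L9 * (N / (2 * LL)) ≤ (m : ℝ) := by
        have hWc : (W.card : ℝ) ≤ ((W \ (W' ∪ X)).card : ℝ) + (W'.card + X.card) := by
          have hsub2 : W ⊆ (W \ (W' ∪ X)) ∪ (W' ∪ X) := by
            intro a ha
            by_cases h : a ∈ W' ∪ X
            · exact Finset.mem_union_right _ h
            · exact Finset.mem_union_left _ (Finset.mem_sdiff.mpr ⟨ha, h⟩)
          have hc1 := Finset.card_le_card hsub2
          have hc2 := Finset.card_union_le (W \ (W' ∪ X)) (W' ∪ X)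
          have hc3 := Finset.card_union_le W' X
          have h5' : W.card ≤ (W \ (W' ∪ X)).card + (W'.card + X.card) := by omega
          exact_mod_cast h5'
        have hW'R : (W'.card : ℝ) ≤ 2 * D * j := by exact_mod_cast hW'c
        have hDpos : (0:ℝ) ≤ (D:ℝ) := Nat.cast_nonneg _
        have h4' : 8 * (2 * (D:ℝ) + 1) * LL ≤ L4 := by
          rw [div_le_div_iff₀ hL4pos (by positivity)] at h4
          linarith
        have hjb2 : (2 * (D:ℝ) + 1) * j ≤ N / (4 * LL) := by
          rw [le_div_iff₀ (by positivity)]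
          rw [le_div_iff₀ hL4pos] at hj2
          nlinarith [mul_le_mul_of_nonneg_left hj2 (by positivity : (0:ℝ) ≤ 2 * D + 1)]
        have hW''R : N / (2 * LL) ≤ ((W \ (W' ∪ X)).card : ℝ) := by
          have hu0 : 0 < N / LL := by positivity
          have h34 : (3/4:ℝ) * (N / LL) ≤ (1 - γn) * N / LL := by
            rw [mul_div_assoc]
            exact mul_le_mul_of_nonneg_right (by linarith) hu0.le
          have hq4 : N / (4 * LL) = (N / LL) / 4 := by ring
          have hq2 : N / (2 * LL) = (N / LL) / 2 := by ring
          linarith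
        have hmcast : (m : ℝ) = (j : ℝ) * ((W \ (W' ∪ X)).card : ℝ) := by
          rw [hmdef]; push_cast; rfl
        rw [hmcast]
        exact mul_le_mul hj1 hW''R (by positivity) hjR0.le
      -- exponent bound
      have hrm : c₀ * N ≤ r * m := by
        have h5' : 16 * c₀ * (L9 * LL) ≤ α * L := by
          rw [div_le_div_iff₀ hL0 (by positivity)] at h5
          linarith
        have hrm1 : r * (N / L9 * (N / (2 * LL))) ≤ r * m := mul_le_mul_of_nonneg_left hmR hr0
        have heq : r * (N / L9 * (N / (2 * LL))) = α * L * N / (16 * (L9 * LL)) := by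
          rw [hrdef]; field_simp; ring
        rw [heq] at hrm1
        have hmid : c₀ * N ≤ α * L * N / (16 * (L9 * LL)) := by
          rw [le_div_iff₀ (by positivity)]
          nlinarith [hN0.le]
        exact le_trans hmid hrm1
      have hfinal : (1 - (k : ℝ≥0∞) * (min q 1 * ((cc : ℕ) : ℝ≥0∞)⁻¹)) ^ m ≤ BND1 := by
        calc (1 - (k : ℝ≥0∞) * (min q 1 * ((cc : ℕ) : ℝ≥0∞)⁻¹)) ^ m
            ≤ (1 - ENNReal.ofReal r) ^ m := pow_le_pow_left' (tsub_le_tsub_left hρ 1) m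
          _ = (ENNReal.ofReal (1 - r)) ^ m := by
              rw [ENNReal.ofReal_sub 1 hr0, ENNReal.ofReal_one]
          _ = ENNReal.ofReal ((1 - r) ^ m) := (ENNReal.ofReal_pow (by linarith) m).symm
          _ ≤ BND1 := by
              rw [hBND1def]
              apply ENNReal.ofReal_le_ofReal
              calc (1 - r) ^ m ≤ Real.exp (-r) ^ m :=
                    pow_le_pow_left₀ (by linarith) (by linarith [Real.add_one_le_exp (-r)]) m
                _ = Real.exp ((m : ℕ) * (-r)) := (Real.exp_nat_mul _ m).symm
                _ ≤ Real.exp (-(c₀ * N)) := by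
                    apply Real.exp_le_exp.mpr
                    nlinarith [hrm, mul_comm (m : ℝ) r]
      calc cHyper n 2 cc q (A (X, W, W', C1, C2))
          ≤ cHyper n 2 cc q {ω | ∀ x ∈ X, ∀ w ∈ W, ∀ y, col ω x w = some y →
              y ∈ C2 ∨ w ∈ W' ∨ y ∉ C1} := measure_mono hA
        _ ≤ (1 - (k : ℝ≥0∞) * (min q 1 * ((cc : ℕ) : ℝ≥0∞)⁻¹)) ^ m := hstep
        _ ≤ BND1 := hfinal
    · have hempty : A (X, W, W', C1, C2) = ∅ := by
        ext ω; simp only [hAdef, Set.mem_setOf_eq, Set.mem_empty_iff_false, iff_false]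
        exact fun h => hv h.1
      rw [hempty]
      simp
  refine le_trans (measure_mono hcover) ?_
  have hsum : cHyper n 2 cc q (⋃ i, A i) ≤ (Fintype.card (Finset (Fin n) × Finset (Fin n) × Finset (Fin n) × Finset (Fin cc) × Finset (Fin cc)) : ℝ≥0∞) * BND1 := by
    calc cHyper n 2 cc q (⋃ i, A i) ≤ ∑' i, cHyper n 2 cc q (A i) :=
          measure_iUnion_le _
      _ = ∑ i, cHyper n 2 cc q (A i) := tsum_fintype _
      _ ≤ Finset.univ.card • BND1 := Finset.sum_le_card_nsmul _ _ _ fun i _ => hAbound i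
      _ = (Fintype.card (Finset (Fin n) × Finset (Fin n) × Finset (Fin n) × Finset (Fin cc) × Finset (Fin cc)) : ℝ≥0∞) * BND1 := by rw [Finset.card_univ, nsmul_eq_mul]
  refine le_trans hsum ?_
  have hcardCfg : (Fintype.card (Finset (Fin n) × Finset (Fin n) × Finset (Fin n) × Finset (Fin cc) × Finset (Fin cc)) : ℝ≥0∞) ≤ 2 ^ (7 * n + 2) := by
    have hc : Fintype.card (Finset (Fin n) × Finset (Fin n) × Finset (Fin n) × Finset (Fin cc) × Finset (Fin cc)) = 2 ^ (3 * n + 2 * cc) := by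
      simp only [Fintype.card_prod, Fintype.card_finset, Fintype.card_fin]
      rw [show 3 * n + 2 * cc = n + (n + (n + (cc + cc))) by ring, pow_add, pow_add, pow_add,
        pow_add]
    rw [hc]
    have hcast : ((2 ^ (3 * n + 2 * cc) : ℕ) : ℝ≥0∞) = (2 : ℝ≥0∞) ^ (3 * n + 2 * cc) := by
      push_cast; rfl
    rw [hcast]
    exact pow_le_pow_right' (by norm_num) (by omega)
  have hreal : (2 : ℝ) ^ (7 * n + 2) * Real.exp (-(c₀ * N)) = 4 * Real.exp (-N) := by
    have h2exp : (2 : ℝ) ^ (7 * n + 2) = 4 * Real.exp (((7 * n : ℕ) : ℝ) * Real.log 2) := by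
      rw [pow_add, Real.exp_nat_mul, Real.exp_log two_pos]
      ring
    have hexp : ((7 * n : ℕ) : ℝ) * Real.log 2 + -(c₀ * N) = -N := by
      rw [hc₀def, hNdef]; push_cast; ring
    rw [h2exp, mul_assoc, ← Real.exp_add, hexp]
  calc (Fintype.card (Finset (Fin n) × Finset (Fin n) × Finset (Fin n) × Finset (Fin cc) × Finset (Fin cc)) : ℝ≥0∞) * BND1 ≤ 2 ^ (7 * n + 2) * BND1 :=
        mul_le_mul_left hcardCfg _
    _ = ENNReal.ofReal ((2 : ℝ) ^ (7 * n + 2) * Real.exp (-(c₀ * N))) := by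
        rw [hBND1def, ENNReal.ofReal_mul (by positivity),
          ENNReal.ofReal_pow (by norm_num : (0:ℝ) ≤ 2), ENNReal.ofReal_ofNat]
    _ = ENNReal.ofReal (4 * Real.exp (-N)) := by rw [hreal]


/-- For constants `0 < α < ε < 1`, a fixed `D ≥ 1`, `c = ⌈(1+ε)n⌉`
colors, `log n/n ≤ p ≤ 2 log n/n` and `γ(n) → 0`, the probability that `G ~ G_c(n,p)`
admits `n/log^{0.9} n ≤ j ≤ 2n/log^{0.4} n`, a set `X` of size `j`, a set `W` of size
`(1±γ(n))·n/log log n`, `W' ⊆ W` and `C2 ⊆ C1 ⊆ [c]` with `|C1| = ⌈αn⌉`,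
`|W'|, |C2| ≤ 2Dj`, such that every `G`-edge between `X` and `W` has its color in
`C2`, or its endpoint in `W'`, or its color outside `C1`, tends to `0`. -/
theorem bad_configuration_unlikely (α ε : ℝ) (hα0 : 0 < α) (hαε : α < ε) (hε1 : ε < 1)
    (D : ℕ) (hD : 0 < D)
    (p : ℕ → ℝ) (hplo : ∀ n : ℕ, Real.log n / n ≤ p n)
    (hphi : ∀ n : ℕ, p n ≤ 2 * Real.log n / n)
    (γ : ℕ → ℝ) (hγ0 : ∀ n, 0 < γ n) (hγ1 : ∀ n, γ n < 1)
    (hγ : Tendsto γ atTop (nhds 0)) :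
    Tendsto (fun n : ℕ => cHyper n 2 ⌈(1 + ε) * n⌉₊ (ENNReal.ofReal (p n))
      {ω | ∃ j : ℕ, ∃ X W W' : Finset (Fin n),
        ∃ C1 C2 : Finset (Fin ⌈(1 + ε) * n⌉₊),
        (n : ℝ) / Real.log n ^ (0.9 : ℝ) ≤ (j : ℝ) ∧
        (j : ℝ) ≤ 2 * n / Real.log n ^ (0.4 : ℝ) ∧
        X.card = j ∧
        (1 - γ n) * n / Real.log (Real.log n) ≤ (W.card : ℝ) ∧
        (W.card : ℝ) ≤ (1 + γ n) * n / Real.log (Real.log n) ∧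
        W' ⊆ W ∧ W'.card ≤ 2 * D * j ∧
        C1.card = ⌈α * n⌉₊ ∧ C2 ⊆ C1 ∧ C2.card ≤ 2 * D * j ∧
        ∀ x ∈ X, ∀ w ∈ W, ∀ y, col ω x w = some y →
          y ∈ C2 ∨ w ∈ W' ∨ y ∉ C1})
      atTop (nhds 0) := by
  have hlog2 : 0 < Real.log 2 := Real.log_pos one_lt_two
  have hlog : Tendsto (fun n : ℕ => Real.log n) atTop atTop :=
    Real.tendsto_log_atTop.comp tendsto_natCast_atTop_atTop
  have hloglog : Tendsto (fun n : ℕ => Real.log (Real.log n)) atTop atTop :=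
    Real.tendsto_log_atTop.comp hlog
  have ev1 : ∀ᶠ n : ℕ in atTop, 1 ≤ Real.log n := hlog.eventually_ge_atTop 1
  have ev2 : ∀ᶠ n : ℕ in atTop, 1 ≤ Real.log (Real.log n) := hloglog.eventually_ge_atTop 1
  have ev3 : ∀ᶠ n : ℕ in atTop, γ n ≤ 1 / 4 :=
    hγ.eventually_le_const (by norm_num : (0:ℝ) < 1 / 4)
  have hT1 : Tendsto (fun n : ℕ => Real.log (Real.log n) / Real.log n ^ (0.4 : ℝ))
      atTop (nhds 0) :=
    ((isLittleO_log_rpow_atTop (by norm_num : (0:ℝ) < 0.4)).tendsto_div_nhds_zero).comp hlog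
  have ev4 : ∀ᶠ n : ℕ in atTop,
      Real.log (Real.log n) / Real.log n ^ (0.4 : ℝ) ≤ 1 / (8 * (2 * D + 1)) :=
    hT1.eventually_le_const (by positivity)
  have hT2 : Tendsto (fun n : ℕ =>
      Real.log n ^ (0.9 : ℝ) * Real.log (Real.log n) / Real.log n) atTop (nhds 0) := by
    have h1 : Tendsto (fun y : ℝ => Real.log y / y ^ (0.1 : ℝ)) atTop (nhds 0) :=
      (isLittleO_log_rpow_atTop (by norm_num : (0:ℝ) < 0.1)).tendsto_div_nhds_zero
    have h2 : Tendsto (fun y : ℝ => y ^ (0.9 : ℝ) * Real.log y / y) atTop (nhds 0) := by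
      refine h1.congr' ?_
      filter_upwards [eventually_gt_atTop (0:ℝ)] with y hy
      have e1 : y ^ (0.9 : ℝ) / y = (y ^ (0.1 : ℝ))⁻¹ := by
        rw [div_eq_mul_inv, ← Real.rpow_neg_one y, ← Real.rpow_add hy, ← Real.rpow_neg hy.le]
        norm_num
      rw [mul_comm, mul_div_assoc, e1, div_eq_mul_inv]
    exact h2.comp hlog
  have ev5 : ∀ᶠ n : ℕ in atTop,
      Real.log n ^ (0.9 : ℝ) * Real.log (Real.log n) / Real.log n
        ≤ α / (16 * (7 * Real.log 2 + 1)) :=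
    hT2.eventually_le_const (div_pos hα0 (by nlinarith))
  have hT3 : Tendsto (fun n : ℕ => Real.log n ^ (0.4 : ℝ)) atTop atTop :=
    (tendsto_rpow_atTop (by norm_num : (0:ℝ) < 0.4)).comp hlog
  have ev6 : ∀ᶠ n : ℕ in atTop, 8 * D / α ≤ Real.log n ^ (0.4 : ℝ) :=
    hT3.eventually_ge_atTop _
  have ev7 : ∀ᶠ n : ℕ in atTop, 1 ≤ n := eventually_ge_atTop 1
  have hB : Tendsto (fun n : ℕ => ENNReal.ofReal (4 * Real.exp (-(n : ℝ)))) atTop (nhds 0) := by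
    have hexp : Tendsto (fun n : ℕ => 4 * Real.exp (-(n : ℝ))) atTop (nhds 0) := by
      have hneg : Tendsto (fun n : ℕ => -(n : ℝ)) atTop atBot :=
        tendsto_neg_atBot_iff.mpr tendsto_natCast_atTop_atTop
      have := Real.tendsto_exp_atBot.comp hneg
      simpa using this.const_mul (4:ℝ)
    simpa using ENNReal.tendsto_ofReal hexp
  refine tendsto_of_tendsto_of_tendsto_of_le_of_le' tendsto_const_nhds hB
    (Eventually.of_forall fun n => zero_le) ?_
  filter_upwards [ev1, ev2, ev3, ev4, ev5, ev6, ev7] with n h1 h2 h3 h4 h5 h6 hn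
  exact per_n_bound α ε hα0 (hαε.trans hε1) (hα0.trans hαε) hε1 D n (p n) (γ n)
    (hplo n) (hγ0 n) hn h1 h2 h3 h4 h5 h6
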